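/- For |q| < 1, |u| < 1, |v| < 1, the function g(u,v) = (uv;q)_∞ / ((u;q)_∞ (v;q)_∞) has the double Taylor expansion g(u,v) = Σ_{i≥0} Σ_{j≥0} q^{ij} u^i v^j / ((q;q)_i (q;q)_j). -/

import Mathlib

noncomputable def qPoch (z q : ℂ) (n : ℕ) : ℂ := ∏ i ∈ Finset.range n, (1 - z * q ^ i)

open Filter Topology

set_option maxHeartbeats 1000000

private lemma exp_neg_le_one_sub {x r : ℝ} (hx : 0 ≤ x) (hxr : x ≤ r) (hr : r < 1) :
    Real.exp (-(x / (1 - r))) ≤ 1 - x := by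
  have h1r : 0 < 1 - r := by linarith
  have h1 : x / (1 - r) + 1 ≤ Real.exp (x / (1 - r)) := Real.add_one_le_exp _
  have key : 1 ≤ (1 - x) * Real.exp (x / (1 - r)) := by
    have h2 : 1 ≤ (1 - x) * (x / (1 - r) + 1) := by
      rw [div_eq_mul_inv]
      have hinv : (1 - r)⁻¹ * (1 - r) = 1 := inv_mul_cancel₀ h1r.ne'
      nlinarith [mul_nonneg (mul_nonneg hx (sub_nonneg.2 hxr)) (inv_nonneg.2 h1r.le)]
    refine h2.trans (mul_le_mul_of_nonneg_left h1 (by nlinarith))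
  have hE := Real.exp_pos (x / (1 - r))
  have hme := Real.exp_pos (-(x / (1 - r)))
  have h3 : Real.exp (-(x / (1 - r))) * Real.exp (x / (1 - r)) = 1 := by
    rw [← Real.exp_add]; simp
  nlinarith [mul_le_mul_of_nonneg_left key hme.le]

private lemma geom_partial_le {r : ℝ} (hr0 : 0 ≤ r) (hr : r < 1) (n : ℕ) :
    ∑ i ∈ Finset.range n, r ^ i ≤ (1 - r)⁻¹ := by
  have h := Summable.sum_le_tsum (Finset.range n) (fun i _ => pow_nonneg hr0 i)
    (summable_geometric_of_lt_one hr0 hr)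
  rwa [tsum_geometric_of_lt_one hr0 hr] at h

private lemma qPoch_norm_le {a q : ℂ} (ha : ‖a‖ ≤ 1) (hq : ‖q‖ < 1) (n : ℕ) :
    ‖qPoch a q n‖ ≤ Real.exp ((1 - ‖q‖)⁻¹) := by
  have h0 : (0:ℝ) ≤ ‖q‖ := norm_nonneg q
  rw [qPoch]
  calc ‖∏ i ∈ Finset.range n, ((1:ℂ) - a * q ^ i)‖
      = ∏ i ∈ Finset.range n, ‖(1 : ℂ) - a * q ^ i‖ := norm_prod _ _
    _ ≤ ∏ i ∈ Finset.range n, Real.exp (‖q‖ ^ i) := by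
        refine Finset.prod_le_prod (fun i _ => norm_nonneg _) (fun i _ => ?_)
        have h1 : ‖(1 : ℂ) - a * q ^ i‖ ≤ 1 + ‖q‖ ^ i := by
          refine (norm_sub_le _ _).trans ?_
          simp only [norm_one, norm_mul, norm_pow]
          have : ‖a‖ * ‖q‖ ^ i ≤ 1 * ‖q‖ ^ i := by
            exact mul_le_mul_of_nonneg_right ha (pow_nonneg h0 i)
          linarith
        refine h1.trans ?_
        have := Real.add_one_le_exp (‖q‖ ^ i)
        linarith
    _ = Real.exp (∑ i ∈ Finset.range n, ‖q‖ ^ i) := by rw [Real.exp_sum]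
    _ ≤ Real.exp ((1 - ‖q‖)⁻¹) := Real.exp_le_exp.2 (geom_partial_le h0 hq n)

private lemma qPoch_q_norm_ge {q : ℂ} (hq : ‖q‖ < 1) (n : ℕ) :
    Real.exp (-((1 - ‖q‖)⁻¹ * (1 - ‖q‖)⁻¹)) ≤ ‖qPoch q q n‖ := by
  have h0 : (0:ℝ) ≤ ‖q‖ := norm_nonneg q
  have h1r : 0 < 1 - ‖q‖ := by linarith
  calc Real.exp (-((1 - ‖q‖)⁻¹ * (1 - ‖q‖)⁻¹))
      ≤ Real.exp (-(∑ i ∈ Finset.range n, ‖q‖ ^ (i + 1) / (1 - ‖q‖))) := by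
        refine Real.exp_le_exp.2 (neg_le_neg ?_)
        rw [← Finset.sum_div, div_eq_mul_inv, mul_comm]
        refine mul_le_mul_of_nonneg_left ?_ (inv_nonneg.2 h1r.le)
        calc ∑ i ∈ Finset.range n, ‖q‖ ^ (i + 1) ≤ ∑ i ∈ Finset.range n, ‖q‖ ^ i := by
              refine Finset.sum_le_sum (fun i _ => ?_)
              exact pow_le_pow_of_le_one h0 hq.le (Nat.le_succ i)
          _ ≤ (1 - ‖q‖)⁻¹ := geom_partial_le h0 hq n
    _ = ∏ i ∈ Finset.range n, Real.exp (-(‖q‖ ^ (i + 1) / (1 - ‖q‖))) := by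
        rw [← Real.exp_sum, ← Finset.sum_neg_distrib]
    _ ≤ ∏ i ∈ Finset.range n, ‖(1 : ℂ) - q * q ^ i‖ := by
        refine Finset.prod_le_prod (fun i _ => (Real.exp_pos _).le) (fun i _ => ?_)
        have hle : ‖q‖ ^ (i + 1) ≤ ‖q‖ := pow_le_of_le_one h0 hq.le (Nat.succ_ne_zero i)
        have h2 : Real.exp (-(‖q‖ ^ (i + 1) / (1 - ‖q‖))) ≤ 1 - ‖q‖ ^ (i + 1) :=
          exp_neg_le_one_sub (pow_nonneg h0 _) hle hq
        refine h2.trans ?_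
        have h3 : ‖q * q ^ i‖ = ‖q‖ ^ (i + 1) := by
          rw [norm_mul, norm_pow, pow_succ, mul_comm]
        calc 1 - ‖q‖ ^ (i + 1) = ‖(1:ℂ)‖ - ‖q * q ^ i‖ := by rw [h3, norm_one]
          _ ≤ ‖(1 : ℂ) - q * q ^ i‖ := norm_sub_norm_le _ _
    _ = ‖qPoch q q n‖ := by rw [qPoch, norm_prod]

private lemma qPoch_q_ne_zero {q : ℂ} (hq : ‖q‖ < 1) (n : ℕ) : qPoch q q n ≠ 0 := by
  intro h
  have := qPoch_q_norm_ge hq n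
  rw [h, norm_zero] at this
  exact absurd this (not_le.2 (Real.exp_pos _))

private lemma one_sub_ne_zero' {w : ℂ} (hw : ‖w‖ < 1) : (1 : ℂ) - w ≠ 0 := by
  intro h
  have : (1 : ℂ) = w := by linear_combination h
  rw [← this] at hw
  simp at hw

private lemma factor_ne_zero {q z : ℂ} (hq : ‖q‖ < 1) (hz : ‖z‖ < 1) (l : ℕ) :
    (1 : ℂ) - z * q ^ l ≠ 0 := by
  refine one_sub_ne_zero' ?_
  rw [norm_mul, norm_pow]
  calc ‖z‖ * ‖q‖ ^ l ≤ ‖z‖ * 1 := by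
        refine mul_le_mul_of_nonneg_left ?_ (norm_nonneg z)
        exact pow_le_one₀ (norm_nonneg q) hq.le
    _ < 1 := by rw [mul_one]; exact hz

private lemma log_summable {q z : ℂ} (hq : ‖q‖ < 1) (hz : ‖z‖ < 1) :
    Summable fun l : ℕ => Complex.log (1 - z * q ^ l) := by
  have h0q : (0:ℝ) ≤ ‖q‖ := norm_nonneg q
  have h0z : (0:ℝ) ≤ ‖z‖ := norm_nonneg z
  have hinv : (0:ℝ) ≤ (1 - ‖z‖)⁻¹ := inv_nonneg.2 (by linarith)
  refine Summable.of_norm_bounded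
    (g := fun l => (‖z‖ * (‖z‖ * (1 - ‖z‖)⁻¹ / 2 + 1)) * ‖q‖ ^ l)
    ((summable_geometric_of_lt_one h0q hq).mul_left _) (fun l => ?_)
  have hwn : ‖-(z * q ^ l)‖ = ‖z‖ * ‖q‖ ^ l := by rw [norm_neg, norm_mul, norm_pow]
  have hql : ‖q‖ ^ l ≤ 1 := pow_le_one₀ h0q hq.le
  have hwz : ‖-(z * q ^ l)‖ ≤ ‖z‖ := by
    rw [hwn]; nlinarith [pow_nonneg h0q l]
  have hw1 : ‖-(z * q ^ l)‖ < 1 := lt_of_le_of_lt hwz hz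
  have h1 : ‖Complex.log (1 + -(z * q ^ l))‖ ≤
      ‖-(z * q ^ l)‖ ^ 2 * (1 - ‖-(z * q ^ l)‖)⁻¹ / 2 + ‖-(z * q ^ l)‖ :=
    Complex.norm_log_one_add_le hw1
  have h2 : (1 - ‖-(z * q ^ l)‖)⁻¹ ≤ (1 - ‖z‖)⁻¹ := by
    refine inv_anti₀ (by linarith) (by linarith)
  have hw0 : (0:ℝ) ≤ ‖-(z * q ^ l)‖ := norm_nonneg _
  have : (1 : ℂ) + -(z * q ^ l) = 1 - z * q ^ l := by ring
  rw [← this]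
  refine h1.trans ?_
  rw [hwn]
  rw [hwn] at h2
  have hI0 : (0:ℝ) ≤ (1 - ‖z‖ * ‖q‖ ^ l)⁻¹ := by
    refine inv_nonneg.2 ?_
    nlinarith [pow_nonneg h0q l]
  have key : (‖z‖ * ‖q‖ ^ l) ^ 2 * (1 - ‖z‖ * ‖q‖ ^ l)⁻¹ ≤
      (‖z‖ * ‖z‖ * ‖q‖ ^ l) * (1 - ‖z‖)⁻¹ := by
    refine mul_le_mul ?_ h2 hI0 (by positivity)
    nlinarith [pow_nonneg h0q l]
  nlinarith [key]

private lemma hasProd_qprod {q z : ℂ} (hq : ‖q‖ < 1) (hz : ‖z‖ < 1) :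
    HasProd (fun l : ℕ => (1 : ℂ) - z * q ^ l) (∏' l : ℕ, ((1 : ℂ) - z * q ^ l)) :=
  (Complex.multipliable_of_summable_log (log_summable hq hz)).hasProd

private lemma tprod_ne_zero {q z : ℂ} (hq : ‖q‖ < 1) (hz : ‖z‖ < 1) :
    (∏' l : ℕ, ((1 : ℂ) - z * q ^ l)) ≠ 0 := by
  have h := Complex.cexp_tsum_eq_tprod (f := fun l => (1 : ℂ) - z * q ^ l)
    (fun l => factor_ne_zero hq hz l) (log_summable hq hz)
  have h2 := h
  rw [← h2]
  exact Complex.exp_ne_zero _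

private lemma tprod_eq_exp {q z : ℂ} (hq : ‖q‖ < 1) (hz : ‖z‖ < 1) :
    (∏' l : ℕ, ((1 : ℂ) - z * q ^ l))
      = Complex.exp (∑' l : ℕ, Complex.log (1 - z * q ^ l)) := by
  have h := Complex.cexp_tsum_eq_tprod (f := fun l => (1 : ℂ) - z * q ^ l)
    (fun l => factor_ne_zero hq hz l) (log_summable hq hz)
  exact h.symm

private lemma tendsto_qPoch {q z : ℂ} (hq : ‖q‖ < 1) (hz : ‖z‖ < 1) :
    Tendsto (fun n => qPoch z q n) atTop (𝓝 (∏' l : ℕ, ((1 : ℂ) - z * q ^ l))) :=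
  (hasProd_qprod hq hz).tendsto_prod_nat

private noncomputable def qF (q a z : ℂ) : ℂ := ∑' n : ℕ, qPoch a q n / qPoch q q n * z ^ n

private lemma qPoch_div_norm_le {q a : ℂ} (hq : ‖q‖ < 1) (ha : ‖a‖ ≤ 1) (n : ℕ) :
    ‖qPoch a q n / qPoch q q n‖ ≤
      Real.exp ((1 - ‖q‖)⁻¹) / Real.exp (-((1 - ‖q‖)⁻¹ * (1 - ‖q‖)⁻¹)) := by
  rw [norm_div]
  exact div_le_div₀ (Real.exp_pos _).le (qPoch_norm_le ha hq n) (Real.exp_pos _)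
    (qPoch_q_norm_ge hq n)

private lemma qF_summable {q a z : ℂ} (hq : ‖q‖ < 1) (ha : ‖a‖ ≤ 1) (hz : ‖z‖ < 1) :
    Summable fun n : ℕ => qPoch a q n / qPoch q q n * z ^ n := by
  refine Summable.of_norm_bounded
    (g := fun n => (Real.exp ((1 - ‖q‖)⁻¹) / Real.exp (-((1 - ‖q‖)⁻¹ * (1 - ‖q‖)⁻¹))) * ‖z‖ ^ n)
    ((summable_geometric_of_lt_one (norm_nonneg z) hz).mul_left _) (fun n => ?_)
  rw [norm_mul, norm_pow]
  exact mul_le_mul (qPoch_div_norm_le hq ha n) le_rfl (pow_nonneg (norm_nonneg z) n)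
    (by positivity)

private lemma qF_funEq {q a z : ℂ} (hq : ‖q‖ < 1) (ha : ‖a‖ ≤ 1) (hz : ‖z‖ < 1) :
    (1 - z) * qF q a z = (1 - a * z) * qF q a (q * z) := by
  have hqz : ‖q * z‖ < 1 := by
    rw [norm_mul]
    nlinarith [norm_nonneg q, norm_nonneg z]
  set c : ℕ → ℂ := fun n => qPoch a q n / qPoch q q n with hc
  have hs1 : Summable fun n => c n * z ^ n := qF_summable hq ha hz
  have hs2 : Summable fun n => c n * (q * z) ^ n := qF_summable hq ha hqz
  have key : ∀ n : ℕ, c (n + 1) * z ^ (n + 1) - c (n + 1) * (q * z) ^ (n + 1)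
      = z * (c n * z ^ n) - a * z * (c n * (q * z) ^ n) := by
    intro n
    have h1 : qPoch a q (n + 1) = qPoch a q n * (1 - a * q ^ n) := Finset.prod_range_succ _ n
    have h2 : qPoch q q (n + 1) = qPoch q q n * (1 - q * q ^ n) := Finset.prod_range_succ _ n
    have hn0 : qPoch q q n ≠ 0 := qPoch_q_ne_zero hq n
    have hn1 : (1 : ℂ) - q * q ^ n ≠ 0 := by
      have h3 := qPoch_q_ne_zero hq (n + 1)
      rw [h2] at h3
      exact right_ne_zero_of_mul h3
    have hcrec : c (n + 1) * (1 - q * q ^ n) = c n * (1 - a * q ^ n) := by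
      simp only [hc, h1, h2]
      rw [← div_div, div_mul_cancel₀ _ hn1]
      ring
    linear_combination z ^ (n + 1) * hcrec
  have hA : (∑' n, (c n * z ^ n - c n * (q * z) ^ n))
      = ∑' n, (z * (c n * z ^ n) - a * z * (c n * (q * z) ^ n)) := by
    rw [Summable.tsum_eq_zero_add (hs1.sub hs2)]
    simp only [pow_zero, mul_one, sub_self, zero_add]
    exact tsum_congr key
  have e1 : qF q a z - qF q a (q * z) = ∑' n, (c n * z ^ n - c n * (q * z) ^ n) :=
    (Summable.tsum_sub hs1 hs2).symm
  have e2 : z * qF q a z - a * z * qF q a (q * z)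
      = ∑' n, (z * (c n * z ^ n) - a * z * (c n * (q * z) ^ n)) := by
    have t1 : z * qF q a z = ∑' n, z * (c n * z ^ n) := tsum_mul_left.symm
    have t2 : a * z * qF q a (q * z) = ∑' n, (a * z) * (c n * (q * z) ^ n) := tsum_mul_left.symm
    rw [t1, t2]
    exact (Summable.tsum_sub (hs1.mul_left z) (hs2.mul_left (a * z))).symm
  have e3 : qF q a z - qF q a (q * z) = z * qF q a z - a * z * qF q a (q * z) := by
    rw [e1, e2, hA]
  linear_combination e3

private lemma norm_pow_mul_lt_one {q z : ℂ} (hq : ‖q‖ < 1) (hz : ‖z‖ < 1) (N : ℕ) :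
    ‖q ^ N * z‖ < 1 := by
  rw [norm_mul, norm_pow]
  calc ‖q‖ ^ N * ‖z‖ ≤ 1 * ‖z‖ :=
        mul_le_mul_of_nonneg_right (pow_le_one₀ (norm_nonneg q) hq.le) (norm_nonneg z)
    _ < 1 := by rwa [one_mul]

private lemma qF_prod_eq {q a z : ℂ} (hq : ‖q‖ < 1) (ha : ‖a‖ ≤ 1) (hz : ‖z‖ < 1) (N : ℕ) :
    qF q a z * qPoch z q N = qF q a (q ^ N * z) * qPoch (a * z) q N := by
  induction N with
  | zero => simp [qPoch]
  | succ N ih =>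
    have hzN : ‖q ^ N * z‖ < 1 := norm_pow_mul_lt_one hq hz N
    have hfe := qF_funEq hq ha hzN
    have hq1 : qPoch z q (N + 1) = qPoch z q N * (1 - z * q ^ N) := Finset.prod_range_succ _ N
    have hq2 : qPoch (a * z) q (N + 1) = qPoch (a * z) q N * (1 - a * z * q ^ N) :=
      Finset.prod_range_succ _ N
    have hpow : qF q a (q ^ (N + 1) * z) = qF q a (q * (q ^ N * z)) := by
      congr 1
      ring
    rw [hq1, hq2, hpow, ← mul_assoc, ih]
    linear_combination qPoch (a * z) q N * hfe

private lemma qF_tendsto_one {q a z : ℂ} (hq : ‖q‖ < 1) (ha : ‖a‖ ≤ 1) (hz : ‖z‖ < 1) :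
    Tendsto (fun N : ℕ => qF q a (q ^ N * z)) atTop (𝓝 1) := by
  have h := tendsto_tsum_of_dominated_convergence (𝓕 := atTop)
    (f := fun (N : ℕ) (n : ℕ) => qPoch a q n / qPoch q q n * (q ^ N * z) ^ n)
    (g := fun n : ℕ => if n = 0 then (1 : ℂ) else 0)
    (bound := fun n : ℕ =>
      (Real.exp ((1 - ‖q‖)⁻¹) / Real.exp (-((1 - ‖q‖)⁻¹ * (1 - ‖q‖)⁻¹))) * ‖z‖ ^ n)
    ((summable_geometric_of_lt_one (norm_nonneg z) hz).mul_left _)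
    (fun k => ?_) ?_
  · have hg : (∑' n : ℕ, if n = 0 then (1 : ℂ) else 0) = 1 := tsum_ite_eq 0 (fun _ => (1 : ℂ))
    rw [hg] at h
    exact h
  · rcases Nat.eq_zero_or_pos k with rfl | hk
    · simp only [pow_zero, mul_one, if_pos rfl]
      have : qPoch a q 0 / qPoch q q 0 = 1 := by simp [qPoch]
      rw [this]
      exact tendsto_const_nhds
    · have hk0 : k ≠ 0 := hk.ne'
      simp only [if_neg hk0]
      have hq0 : Tendsto (fun N : ℕ => q ^ N) atTop (𝓝 0) :=
        tendsto_pow_atTop_nhds_zero_of_norm_lt_one hq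
      have hcont : Continuous fun w : ℂ => qPoch a q k / qPoch q q k * (w * z) ^ k := by
        continuity
      have h2 := (hcont.tendsto 0).comp hq0
      simp only [Function.comp, zero_mul, zero_pow hk0, mul_zero] at h2
      exact h2
  · refine Filter.Eventually.of_forall (fun N => fun k => ?_)
    rw [norm_mul, norm_pow]
    refine mul_le_mul (qPoch_div_norm_le hq ha k) ?_ (pow_nonneg (norm_nonneg _) k)
      (by positivity)
    have hb : ‖q ^ N * z‖ ≤ ‖z‖ := by
      rw [norm_mul, norm_pow]
      calc ‖q‖ ^ N * ‖z‖ ≤ 1 * ‖z‖ :=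
            mul_le_mul_of_nonneg_right (pow_le_one₀ (norm_nonneg q) hq.le) (norm_nonneg z)
        _ = ‖z‖ := one_mul _
    exact pow_le_pow_left₀ (norm_nonneg _) hb k

private lemma q_binomial {q a z : ℂ} (hq : ‖q‖ < 1) (ha : ‖a‖ ≤ 1) (hz : ‖z‖ < 1) :
    qF q a z * (∏' l : ℕ, (1 - z * q ^ l)) = ∏' l : ℕ, (1 - a * z * q ^ l) := by
  have haz : ‖a * z‖ < 1 := by
    rw [norm_mul]
    calc ‖a‖ * ‖z‖ ≤ 1 * ‖z‖ := mul_le_mul_of_nonneg_right ha (norm_nonneg z)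
      _ < 1 := by rwa [one_mul]
  have h1 : Tendsto (fun N => qF q a z * qPoch z q N) atTop
      (𝓝 (qF q a z * ∏' l : ℕ, (1 - z * q ^ l))) := (tendsto_qPoch hq hz).const_mul _
  have h2 : Tendsto (fun N => qF q a (q ^ N * z) * qPoch (a * z) q N) atTop
      (𝓝 (1 * ∏' l : ℕ, (1 - a * z * q ^ l))) :=
    (qF_tendsto_one hq ha hz).mul (tendsto_qPoch hq haz)
  have h3 := tendsto_nhds_unique
    (h1.congr (fun N => qF_prod_eq hq ha hz N)) h2
  rwa [one_mul] at h3

private lemma euler_sum {q w : ℂ} (hq : ‖q‖ < 1) (hw : ‖w‖ < 1) :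
    qF q 0 w * (∏' l : ℕ, (1 - w * q ^ l)) = 1 := by
  have h := q_binomial hq (a := 0) (by simp) hw
  simpa using h

theorem stmt4 (q u v : ℂ) (hq : ‖q‖ < 1) (hu : ‖u‖ < 1) (hv : ‖v‖ < 1) :
    (∏' l : ℕ, (1 - u * v * q ^ l)) /
      ((∏' l : ℕ, (1 - u * q ^ l)) * (∏' l : ℕ, (1 - v * q ^ l))) =
      ∑' i : ℕ, ∑' j : ℕ, q ^ (i * j) * u ^ i * v ^ j / (qPoch q q i * qPoch q q j) := by
  have hPu : (∏' l : ℕ, ((1:ℂ) - u * q ^ l)) ≠ 0 := tprod_ne_zero hq hu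
  have hPv : (∏' l : ℕ, ((1:ℂ) - v * q ^ l)) ≠ 0 := tprod_ne_zero hq hv
  have inner : ∀ i : ℕ, (∑' j : ℕ, q ^ (i * j) * u ^ i * v ^ j / (qPoch q q i * qPoch q q j))
      = (∏' l : ℕ, ((1:ℂ) - v * q ^ l))⁻¹ * (qPoch v q i / qPoch q q i * u ^ i) := by
    intro i
    have hqi : ‖q ^ i * v‖ < 1 := norm_pow_mul_lt_one hq hv i
    have he := euler_sum hq hqi
    have hF : qF q 0 (q ^ i * v) = (∏' l : ℕ, ((1:ℂ) - (q ^ i * v) * q ^ l))⁻¹ :=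
      eq_inv_of_mul_eq_one_left he
    have hvi : qPoch v q i ≠ 0 := by
      rw [qPoch]
      exact Finset.prod_ne_zero_iff.2 fun l _ => factor_ne_zero hq hv l
    have hshift : qPoch v q i * (∏' l : ℕ, ((1:ℂ) - (q ^ i * v) * q ^ l))
        = ∏' l : ℕ, ((1:ℂ) - v * q ^ l) := by
      have e1 : Complex.exp (∑ l ∈ Finset.range i, Complex.log (1 - v * q ^ l))
          = qPoch v q i := by
        rw [Complex.exp_sum, qPoch]
        exact Finset.prod_congr rfl fun l _ => Complex.exp_log (factor_ne_zero hq hv l)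
      have e2 := Summable.sum_add_tsum_nat_add (f := fun l : ℕ => Complex.log (1 - v * q ^ l)) i
        (log_summable hq hv)
      have e3 : (∑' l : ℕ, Complex.log (1 - (q ^ i * v) * q ^ l))
          = ∑' l : ℕ, Complex.log (1 - v * q ^ (l + i)) :=
        tsum_congr fun l => congrArg Complex.log (by ring)
      rw [tprod_eq_exp hq hqi, tprod_eq_exp hq hv, ← e1, e3, ← Complex.exp_add, e2]
    have hinv : (∏' l : ℕ, ((1:ℂ) - (q ^ i * v) * q ^ l))⁻¹
        = qPoch v q i * (∏' l : ℕ, ((1:ℂ) - v * q ^ l))⁻¹ := by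
      rw [← hshift, mul_inv, ← mul_assoc, mul_inv_cancel₀ hvi, one_mul]
    have hqf : (∑' j : ℕ, (q ^ i * v) ^ j / qPoch q q j) = qF q 0 (q ^ i * v) := by
      rw [qF]
      refine tsum_congr fun j => ?_
      have h1 : qPoch 0 q j = 1 := by simp [qPoch]
      rw [h1, div_mul_eq_mul_div, one_mul]
    calc (∑' j : ℕ, q ^ (i * j) * u ^ i * v ^ j / (qPoch q q i * qPoch q q j))
        = ∑' j : ℕ, (u ^ i / qPoch q q i) * ((q ^ i * v) ^ j / qPoch q q j) :=
          tsum_congr fun j => by rw [pow_mul]; ring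
      _ = (u ^ i / qPoch q q i) * ∑' j : ℕ, (q ^ i * v) ^ j / qPoch q q j := tsum_mul_left
      _ = (u ^ i / qPoch q q i) * qF q 0 (q ^ i * v) := by rw [hqf]
      _ = (∏' l : ℕ, ((1:ℂ) - v * q ^ l))⁻¹ * (qPoch v q i / qPoch q q i * u ^ i) := by
          rw [hF, hinv]; ring
  have houter : (∑' i : ℕ, ∑' j : ℕ, q ^ (i * j) * u ^ i * v ^ j /
        (qPoch q q i * qPoch q q j))
      = (∏' l : ℕ, ((1:ℂ) - v * q ^ l))⁻¹ * qF q v u := by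
    rw [tsum_congr inner, tsum_mul_left, qF]
  have hb := q_binomial hq (a := v) hv.le hu
  have hcomm : (∏' l : ℕ, ((1:ℂ) - v * u * q ^ l)) = ∏' l : ℕ, ((1:ℂ) - u * v * q ^ l) :=
    tprod_congr fun l => by ring
  have hqF : qF q v u = (∏' l : ℕ, ((1:ℂ) - u * v * q ^ l)) /
      (∏' l : ℕ, ((1:ℂ) - u * q ^ l)) := by
    rw [eq_div_iff hPu, ← hcomm]
    exact hb
  rw [houter, hqF]
  field_simp
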